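/- Let γ* ∈ U(a,b) with barycentric projection T*(xₚ) = Σⱼ (γ*ₚⱼ/aₚ) yⱼ, let γ̂ ∈ U(a,a) be arbitrary, and let γᵢⱼ = Σₚ γ̂ᵢₚ γ*ₚⱼ/aₚ be the composite coupling. Then the Wasserstein transport cost satisfies Σᵢⱼ γᵢⱼ‖xᵢ − yⱼ‖² = Σᵢₚ γ̂ᵢₚ‖xᵢ − T*(xₚ)‖² + (Σⱼ bⱼ‖yⱼ‖² − Σₚ aₚ‖T*(xₚ)‖²). -/

import Mathlib

open scoped BigOperators

/-- `γ` is a coupling of the weight vectors `a` and `b`: nonnegative entries,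
row sums `a`, column sums `b`. -/
def IsCoupling {n m : ℕ} (a : Fin n → ℝ) (b : Fin m → ℝ) (γ : Fin n → Fin m → ℝ) : Prop :=
  (∀ i j, 0 ≤ γ i j) ∧ (∀ i, ∑ j, γ i j = a i) ∧ (∀ j, ∑ i, γ i j = b j)

open RealInnerProductSpace in
lemma key_biasvar {m d : ℕ} (w : Fin m → ℝ) (hw : ∑ j, w j = 1)
    (y : Fin m → EuclideanSpace ℝ (Fin d)) (x T : EuclideanSpace ℝ (Fin d))
    (hT : T = ∑ j, w j • y j) :
    ∑ j, w j * ‖x - y j‖ ^ 2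
      = ‖x - T‖ ^ 2 + (∑ j, w j * ‖y j‖ ^ 2 - ‖T‖ ^ 2) := by
  have hinner : ⟪x, T⟫ = ∑ j, w j * ⟪x, y j⟫ := by
    rw [hT, inner_sum]
    exact Finset.sum_congr rfl fun j _ => real_inner_smul_right _ _ _
  have h1 : ∀ j, ‖x - y j‖^2 = ‖x‖^2 - 2*⟪x, y j⟫ + ‖y j‖^2 := fun j =>
    norm_sub_sq_real x (y j)
  have h2 : ‖x - T‖^2 = ‖x‖^2 - 2*⟪x, T⟫ + ‖T‖^2 := norm_sub_sq_real x T
  calc ∑ j, w j * ‖x - y j‖ ^ 2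
      = ∑ j, (w j * ‖x‖^2 - 2 * (w j * ⟪x, y j⟫) + w j * ‖y j‖^2) := by
        refine Finset.sum_congr rfl fun j _ => ?_
        rw [h1 j]; ring
    _ = (∑ j, w j) * ‖x‖^2 - 2 * ∑ j, w j * ⟪x, y j⟫ + ∑ j, w j * ‖y j‖^2 := by
        rw [Finset.sum_add_distrib, Finset.sum_sub_distrib, ← Finset.sum_mul,
          ← Finset.mul_sum]
    _ = _ := by rw [hw, ← hinner, h2]; ring

theorem composite_coupling_cost {n m d : ℕ}
    (a : Fin n → ℝ) (b : Fin m → ℝ)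
    (x : Fin n → EuclideanSpace ℝ (Fin d)) (y : Fin m → EuclideanSpace ℝ (Fin d))
    (ha : ∀ p, 0 < a p) (hasum : ∑ p, a p = 1)
    (hb : ∀ j, 0 ≤ b j) (hbsum : ∑ j, b j = 1)
    (γstar : Fin n → Fin m → ℝ) (hγstar : IsCoupling a b γstar)
    (γhat : Fin n → Fin n → ℝ) (hγhat : IsCoupling a a γhat)
    (γ : Fin n → Fin m → ℝ)
    (hγ : ∀ i j, γ i j = ∑ p, γhat i p * γstar p j / a p)
    (Tstar : Fin n → EuclideanSpace ℝ (Fin d))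
    (hTstar : ∀ p, Tstar p = ∑ j, (γstar p j / a p) • y j) :
    ∑ i, ∑ j, γ i j * ‖x i - y j‖ ^ 2
      = ∑ i, ∑ p, γhat i p * ‖x i - Tstar p‖ ^ 2
        + (∑ j, b j * ‖y j‖ ^ 2 - ∑ p, a p * ‖Tstar p‖ ^ 2) := by
  obtain ⟨hsnn, hsrow, hscol⟩ := hγstar
  obtain ⟨hhnn, hhrow, hhcol⟩ := hγhat
  have hane : ∀ p, a p ≠ 0 := fun p => (ha p).ne'
  have hwsum : ∀ p, ∑ j, γstar p j / a p = 1 := by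
    intro p
    rw [← Finset.sum_div, hsrow p, div_self (hane p)]
  -- the per-p bias-variance decomposition
  have hkey : ∀ i p, ∑ j, (γstar p j / a p) * ‖x i - y j‖ ^ 2
      = ‖x i - Tstar p‖ ^ 2 + (∑ j, (γstar p j / a p) * ‖y j‖ ^ 2 - ‖Tstar p‖ ^ 2) :=
    fun i p => key_biasvar _ (hwsum p) y (x i) (Tstar p) (hTstar p)
  calc ∑ i, ∑ j, γ i j * ‖x i - y j‖ ^ 2
      = ∑ i, ∑ p, γhat i p * ∑ j, (γstar p j / a p) * ‖x i - y j‖ ^ 2 := by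
        refine Finset.sum_congr rfl fun i _ => ?_
        rw [show (∑ p, γhat i p * ∑ j, (γstar p j / a p) * ‖x i - y j‖ ^ 2)
          = ∑ p, ∑ j, γhat i p * ((γstar p j / a p) * ‖x i - y j‖ ^ 2) from
          Finset.sum_congr rfl fun p _ => Finset.mul_sum _ _ _, Finset.sum_comm]
        refine Finset.sum_congr rfl fun j _ => ?_
        rw [hγ i j, Finset.sum_mul]
        exact Finset.sum_congr rfl fun p _ => by ring
    _ = ∑ i, ∑ p, γhat i p * ‖x i - Tstar p‖ ^ 2
        + ∑ p, (∑ i, γhat i p) * (∑ j, (γstar p j / a p) * ‖y j‖ ^ 2 - ‖Tstar p‖ ^ 2) := by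
        have h1 : ∀ i, ∑ p, γhat i p * ∑ j, (γstar p j / a p) * ‖x i - y j‖ ^ 2
            = ∑ p, γhat i p * ‖x i - Tstar p‖ ^ 2
              + ∑ p, γhat i p * (∑ j, (γstar p j / a p) * ‖y j‖ ^ 2 - ‖Tstar p‖ ^ 2) := by
          intro i
          rw [← Finset.sum_add_distrib]
          refine Finset.sum_congr rfl fun p _ => ?_
          rw [hkey i p]; ring
        rw [Finset.sum_congr rfl fun i _ => h1 i, Finset.sum_add_distrib]
        congr 1
        rw [Finset.sum_comm]
        exact Finset.sum_congr rfl fun p _ => (Finset.sum_mul _ _ _).symm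
    _ = _ := by
        congr 1
        have : ∀ p, (∑ i, γhat i p) * (∑ j, (γstar p j / a p) * ‖y j‖ ^ 2 - ‖Tstar p‖ ^ 2)
            = (∑ j, γstar p j * ‖y j‖ ^ 2) - a p * ‖Tstar p‖ ^ 2 := by
          intro p
          rw [hhcol p, mul_sub, Finset.mul_sum]
          congr 1
          refine Finset.sum_congr rfl fun j _ => ?_
          field_simp
          rw [mul_assoc]
          exact mul_div_cancel_left₀ _ (hane p)
        rw [Finset.sum_congr rfl fun p _ => this p, Finset.sum_sub_distrib, Finset.sum_comm]
        congr 1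
        refine Finset.sum_congr rfl fun j _ => ?_
        rw [← Finset.sum_mul, hscol j]
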